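/- In the sextic coframe, the forms φ = 3(θ²∧θ³∧θ⁷ + θ¹∧θ⁵∧θ⁶) + θ⁴∧(θ¹∧θ⁷ + 6θ²∧θ⁶ − 15θ³∧θ⁵) and *φ = −20θ¹∧θ⁴∧θ⁵∧θ⁶ + 5θ¹∧θ³∧θ⁵∧θ⁷ − 20θ²∧θ³∧θ⁴∧θ⁷ − 2θ¹∧θ²∧θ⁶∧θ⁷ + 30θ²∧θ³∧θ⁵∧θ⁶ satisfy φ ∧ *φ = c·θ¹∧θ²∧θ³∧θ⁴∧θ⁵∧θ⁶∧θ⁷ for some nonzero constant c. -/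

import Mathlib

open ExteriorAlgebra

lemma aux18 {A : Type*} [Ring A] [Algebra ℝ A] (x : ℕ → A)
    (hs : ∀ i, x i * x i = 0)
    (hc : ∀ i j, x i * x j = -(x j * x i)) :
    ((3 : ℝ) • (x 1 * x 2 * x 6 + x 0 * x 4 * x 5) +
        x 3 * (x 0 * x 6 + (6 : ℝ) • (x 1 * x 5) - (15 : ℝ) • (x 2 * x 4))) *
      ((-20 : ℝ) • (x 0 * x 3 * x 4 * x 5) +
        (5 : ℝ) • (x 0 * x 2 * x 4 * x 6) -
        (20 : ℝ) • (x 1 * x 2 * x 3 * x 6) -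
        (2 : ℝ) • (x 0 * x 1 * x 5 * x 6) +
        (30 : ℝ) • (x 1 * x 2 * x 4 * x 5)) =
      (-210 : ℝ) • (x 0 * x 1 * x 2 * x 3 * x 4 * x 5 * x 6) := by
  have hs' : ∀ i (y : A), x i * (x i * y) = 0 := fun i y => by
    rw [← mul_assoc, hs, zero_mul]
  have hl : ∀ i j, j < i → x i * x j = -(x j * x i) := fun i j _ => hc i j
  have hl' : ∀ i j (y : A), j < i → x i * (x j * y) = -(x j * (x i * y)) := fun i j y _ => by
    rw [← mul_assoc, hc i j, neg_mul, mul_assoc]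
  simp only [sub_eq_add_neg, neg_smul, smul_add, smul_neg, mul_add, add_mul, mul_neg, neg_mul,
    smul_mul_assoc, mul_smul_comm, mul_assoc, neg_neg, hs, hs', hl, hl', zero_mul, mul_zero,
    smul_zero, neg_zero, add_zero, zero_add, smul_smul, Nat.reduceLT]
  module

theorem stmt_18 (θ : Fin 7 → (Fin 7 → ℝ)) (hθ : LinearIndependent ℝ θ) :
    ∃ c : ℝ, c ≠ 0 ∧
      ((3 : ℝ) • (ι ℝ (θ 1) * ι ℝ (θ 2) * ι ℝ (θ 6) + ι ℝ (θ 0) * ι ℝ (θ 4) * ι ℝ (θ 5)) +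
        ι ℝ (θ 3) * (ι ℝ (θ 0) * ι ℝ (θ 6) + (6 : ℝ) • (ι ℝ (θ 1) * ι ℝ (θ 5)) -
          (15 : ℝ) • (ι ℝ (θ 2) * ι ℝ (θ 4)))) *
      ((-20 : ℝ) • (ι ℝ (θ 0) * ι ℝ (θ 3) * ι ℝ (θ 4) * ι ℝ (θ 5)) +
        (5 : ℝ) • (ι ℝ (θ 0) * ι ℝ (θ 2) * ι ℝ (θ 4) * ι ℝ (θ 6)) -
        (20 : ℝ) • (ι ℝ (θ 1) * ι ℝ (θ 2) * ι ℝ (θ 3) * ι ℝ (θ 6)) -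
        (2 : ℝ) • (ι ℝ (θ 0) * ι ℝ (θ 1) * ι ℝ (θ 5) * ι ℝ (θ 6)) +
        (30 : ℝ) • (ι ℝ (θ 1) * ι ℝ (θ 2) * ι ℝ (θ 4) * ι ℝ (θ 5))) =
      c • (ι ℝ (θ 0) * ι ℝ (θ 1) * ι ℝ (θ 2) * ι ℝ (θ 3) * ι ℝ (θ 4) * ι ℝ (θ 5) *
        ι ℝ (θ 6)) := by
  refine ⟨-210, by norm_num, ?_⟩
  exact aux18 (fun n => ι ℝ (θ (Fin.ofNat 7 n))) (fun i => ι_sq_zero _)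
    (fun i j => eq_neg_of_add_eq_zero_left (ι_add_mul_swap _ _))
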